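/- If almost every word s ∈ {0,1}^{2n} with even counts of both letters is a shuffle square (i.e., P[s ∈ S_2(n)] → 1 as n → ∞ over such words), then for almost all s ∈ {0,1}^n one has LT(s) ≥ ⌈n/2⌉ − 1, where LT(s) is the maximal semi-length of a shuffle-square subword of s. -/

import Mathlib

/-- The subword of `s` indexed by the positions where `c` is `true`,
in increasing order of index. -/
def subAt {α : Type*} (s : List α) (c : ℕ → Bool) : List α :=
  ((s.zipIdx.map Prod.swap).filter (fun p => c p.1)).map Prod.snd

/-- `w` is a buffer for `s`: there is a partition `(A₁, A₂)` of the index set of `s`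
(given by the indicator `c` of `A₁`) with `s(A₁) = s(A₂) ∘ w`. -/
def IsBufferOf {α : Type*} (w s : List α) : Prop :=
  ∃ c : ℕ → Bool, subAt s c = subAt s (fun i => !(c i)) ++ w

/-- `bufferSet s t` is the set `B_t(s)` of buffers of the prefix `s[1,t]`. -/
def bufferSet {α : Type*} (s : List α) (t : ℕ) : Set (List α) :=
  {w | IsBufferOf w (s.take t)}

/-- A shuffle square: a word that can be partitioned into two disjoint identical subwords. -/
def IsShuffleSquare {α : Type*} (s : List α) : Prop := IsBufferOf [] s

/-- `LT(s)`: the maximal semi-length of a subword of `s` that is a shuffle square,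
i.e. the largest `m` such that `s` contains two disjoint identical subwords of length `m`. -/
noncomputable def twinSemiLength (s : List Bool) : ℕ :=
  sSup {m : ℕ | ∃ u : List Bool, u.Sublist s ∧ u.length = 2 * m ∧ IsShuffleSquare u}

namespace Twins

variable {α : Type*}

/-- Inductive characterization of interleavings. -/
inductive Ilv : List α → List α → List α → Prop
  | nil : Ilv [] [] []
  | left {a : α} {x y s : List α} : Ilv x y s → Ilv (a :: x) y (a :: s)
  | right {a : α} {x y s : List α} : Ilv x y s → Ilv x (a :: y) (a :: s)

private def subAt' (s : List α) (c : ℕ → Bool) : List α :=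
  match s with
  | [] => []
  | a :: t => (if c 0 then [a] else []) ++ subAt' t (fun i => c (i + 1))

lemma subAt'_congr {s : List α} {c d : ℕ → Bool} (h : ∀ i, c i = d i) :
    subAt' s c = subAt' s d := by
  induction s generalizing c d with
  | nil => rfl
  | cons a t ih => simp only [subAt', h 0, ih (fun i => h (i + 1))]

lemma subAt_eq_aux (s : List α) : ∀ (n : ℕ) (c : ℕ → Bool),
    (((s.zipIdx n).map Prod.swap).filter (fun p => c p.1)).map Prod.snd = subAt' s (fun i => c (n + i)) := by
  induction s with
  | nil => intro n c; rfl
  | cons a t ih =>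
    intro n c
    rw [List.zipIdx_cons, List.map_cons, List.filter_cons, Prod.swap_prod_mk]
    have hc : (subAt' t fun i => c (n + 1 + i)) = subAt' t fun i => c (n + (i + 1)) :=
      subAt'_congr (fun i => congrArg c (by omega))
    by_cases h : c n
    · simp only [h, if_true, List.map_cons, subAt', Nat.add_zero, ih (n + 1) c, hc]
      rfl
    · simp only [h, Bool.false_eq_true, if_false, subAt', Nat.add_zero, List.nil_append,
        ih (n + 1) c, hc]
    
lemma subAt_eq (s : List α) (c : ℕ → Bool) : subAt s c = subAt' s c := by
  rw [subAt]
  rw [subAt_eq_aux s 0 c]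
  exact subAt'_congr (fun i => by rw [Nat.zero_add])

lemma ilv_iff (s x y : List α) :
    (∃ c : ℕ → Bool, subAt s c = x ∧ subAt s (fun i => !(c i)) = y) ↔ Ilv x y s := by
  constructor
  · rintro ⟨c, hx, hy⟩
    subst hx; subst hy
    simp only [subAt_eq]
    clear * -
    induction s generalizing c with
    | nil => exact Ilv.nil
    | cons a t ih =>
      by_cases h : c 0
      · simp only [subAt', h, if_pos rfl, Bool.not_true, Bool.false_eq_true, if_false,
          List.nil_append, List.singleton_append]
        exact Ilv.left (ih _)
      · have h0 : c 0 = false := by simpa using h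
        simp only [subAt', h0, Bool.false_eq_true, if_false, Bool.not_false, if_true,
          List.nil_append, List.singleton_append]
        exact Ilv.right (ih _)
  · intro h
    induction h with
    | nil => exact ⟨fun _ => true, rfl, rfl⟩
    | @left a x y s _ ih =>
      obtain ⟨c, hx, hy⟩ := ih
      refine ⟨fun i => match i with | 0 => true | j + 1 => c j, ?_, ?_⟩
      · rw [subAt_eq] at hx ⊢
        simp only [subAt']
        rw [show (fun i => (match i + 1 with | 0 => true | j + 1 => c j)) = c from rfl, hx]
        rfl
      · rw [subAt_eq] at hy ⊢
        simp only [subAt']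
        rw [show (fun i => !(match i + 1 with | 0 => true | j + 1 => c j)) = fun i => !(c i) from rfl, hy]
        rfl
    | @right a x y s _ ih =>
      obtain ⟨c, hx, hy⟩ := ih
      refine ⟨fun i => match i with | 0 => false | j + 1 => c j, ?_, ?_⟩
      · rw [subAt_eq] at hx ⊢
        simp only [subAt']
        rw [show (fun i => (match i + 1 with | 0 => false | j + 1 => c j)) = c from rfl, hx]
        rfl
      · rw [subAt_eq] at hy ⊢
        simp only [subAt']
        rw [show (fun i => !(match i + 1 with | 0 => false | j + 1 => c j)) = fun i => !(c i) from rfl, hy]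
        rfl

lemma shuffleSquare_iff (s : List α) : IsShuffleSquare s ↔ ∃ w, Ilv w w s := by
  constructor
  · rintro ⟨c, hc⟩
    rw [List.append_nil] at hc
    exact ⟨_, (ilv_iff s _ _).1 ⟨c, rfl, hc.symm⟩⟩
  · rintro ⟨w, hw⟩
    obtain ⟨c, hx, hy⟩ := (ilv_iff s w w).2 hw
    exact ⟨c, by rw [hx, hy, List.append_nil]⟩

lemma Ilv.length {x y s : List α} (h : Ilv x y s) : s.length = x.length + y.length := by
  induction h <;> simp [*] <;> omega

lemma Ilv.symm {x y s : List α} (h : Ilv x y s) : Ilv y x s := by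
  induction h with
  | nil => exact Ilv.nil
  | left _ ih => exact Ilv.right ih
  | right _ ih => exact Ilv.left ih

lemma Ilv.concat {x y s : List α} (h : Ilv x y s) (a : α) :
    Ilv (x ++ [a]) y (s ++ [a]) := by
  induction h with
  | nil => exact Ilv.left Ilv.nil
  | left h ih => exact Ilv.left ih
  | right h ih => exact Ilv.right ih

lemma Ilv.reverse {x y s : List α} (h : Ilv x y s) :
    Ilv x.reverse y.reverse s.reverse := by
  induction h with
  | nil => exact Ilv.nil
  | @left a x y s _ ih => simpa using ih.concat a
  | @right a x y s _ ih => simpa using (ih.symm.concat a).symm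

lemma Ilv.count [DecidableEq α] {x y s : List α} (h : Ilv x y s) (a : α) :
    s.count a = x.count a + y.count a := by
  induction h with
  | nil => rfl
  | left _ ih => simp [List.count_cons, ih]; omega
  | right _ ih => simp [List.count_cons, ih]; omega

lemma ilv_del_left : ∀ (s x y : List α) (a : α), Ilv (a :: x) y s →
    ∃ u, u.Sublist s ∧ Ilv x y u := by
  intro s
  induction s with
  | nil => intro x y a h; cases h
  | cons b t ih =>
    intro x y a h
    cases h with
    | left h' => exact ⟨t, List.sublist_cons_self b t, h'⟩
    | right h' =>
      obtain ⟨u, hu, hi⟩ := ih _ _ _ h'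
      exact ⟨b :: u, hu.cons₂ b, Ilv.right hi⟩

lemma ilv_del_right (s x y : List α) (a : α) (h : Ilv x (a :: y) s) :
    ∃ u, u.Sublist s ∧ Ilv x y u := by
  obtain ⟨u, hu, hi⟩ := ilv_del_left s y x a h.symm
  exact ⟨u, hu, hi.symm⟩

/-- Front-deletion: from a shuffle square `a :: t`, one can delete the first letter and
its twin to obtain a shuffle square sublist of `t`. -/
lemma ss_front_del (a : α) (t : List α) (w : List α) (h : Ilv w w (a :: t)) :
    ∃ u w', u.Sublist t ∧ Ilv w' w' u ∧ u.length = t.length - 1 := by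
  cases h with
  | @left _ x _ _ h' =>
    -- w = a :: x, Ilv x (a :: x) t
    obtain ⟨u, hu, hi⟩ := ilv_del_right t x x a h'
    refine ⟨u, x, hu, hi, ?_⟩
    have h1 : t.length = x.length + (x.length + 1) := h'.length
    have h2 : u.length = x.length + x.length := hi.length
    omega
  | @right _ _ y _ h' =>
    -- w = a :: y, Ilv (a :: y) y t
    obtain ⟨u, hu, hi⟩ := ilv_del_left t y y a h'
    refine ⟨u, y, hu, hi, ?_⟩
    have h1 : t.length = (y.length + 1) + y.length := h'.length
    have h2 : u.length = y.length + y.length := hi.length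
    omega

/-- Back-deletion version. -/
lemma ss_back_del (s : List α) (hne : s ≠ []) (hss : IsShuffleSquare s) :
    ∃ u, u.Sublist s.dropLast ∧ u.length = s.length - 2 ∧ IsShuffleSquare u := by
  obtain ⟨w, hw⟩ := (shuffleSquare_iff s).1 hss
  have hrev := hw.reverse
  obtain ⟨a, t, ht⟩ : ∃ a t, s.reverse = a :: t := by
    cases hr : s.reverse with
    | nil => exact absurd (by simpa using congrArg List.reverse hr) hne
    | cons a t => exact ⟨a, t, rfl⟩
  rw [ht] at hrev
  obtain ⟨u, w', hu, hi, hlen⟩ := ss_front_del a t _ hrev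
  refine ⟨u.reverse, ?_, ?_, (shuffleSquare_iff _).2 ⟨w'.reverse, hi.reverse⟩⟩
  · have : t.reverse = s.dropLast := by
      have := List.tail_reverse (l := s)
      rw [ht] at this
      simp only [List.tail_cons] at this
      rw [this, List.reverse_reverse]
    rw [← this]
    exact hu.reverse
  · have : t.length = s.length - 1 := by
      have := congrArg List.length ht
      simp at this; omega
    simp [hlen, this]; omega

lemma sublist_dropLast {u s : List α} (h : u.Sublist s) :
    u.dropLast.Sublist s.dropLast := by
  have h2 := h.reverse.tail.reverse
  rwa [List.tail_reverse, List.tail_reverse,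
    List.reverse_reverse, List.reverse_reverse] at h2

lemma twin_ge {s u : List Bool} {m : ℕ} (hu : u.Sublist s) (hl : u.length = 2 * m)
    (hss : IsShuffleSquare u) : m ≤ twinSemiLength s := by
  apply le_csSup
  · refine ⟨s.length, fun k hk => ?_⟩
    obtain ⟨v, hv, hvl, _⟩ := hk
    have := hv.length_le
    omega
  · exact ⟨u, hu, hl, hss⟩

/-- Key bound: one deletion. -/
lemma twin_dropLast {s : List Bool} {n : ℕ} (hl : s.length = 2 * n)
    (hss : IsShuffleSquare s) (hn : 1 ≤ n) : n - 1 ≤ twinSemiLength s.dropLast := by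
  have hne : s ≠ [] := by intro h; rw [h] at hl; simp at hl; omega
  obtain ⟨u, hu, hul, huss⟩ := ss_back_del s hne hss
  exact twin_ge hu (by omega) huss

/-- Key bound: two deletions. -/
lemma twin_dropLast2 {s : List Bool} {n : ℕ} (hl : s.length = 2 * n)
    (hss : IsShuffleSquare s) (hn : 2 ≤ n) :
    n - 2 ≤ twinSemiLength s.dropLast.dropLast := by
  have hne : s ≠ [] := by intro h; rw [h] at hl; simp at hl; omega
  obtain ⟨u, hu, hul, huss⟩ := ss_back_del s hne hss
  have hune : u ≠ [] := by intro h; rw [h] at hul; simp at hul; omega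
  obtain ⟨v, hv, hvl, hvss⟩ := ss_back_del u hune huss
  have : v.Sublist s.dropLast.dropLast := hv.trans (sublist_dropLast hu)
  exact twin_ge this (by omega) hvss


def res {N M : ℕ} (h : M ≤ N) (f : Fin N → Bool) : Fin M → Bool := fun i => f (Fin.castLE h i)

lemma take_ofFn {N M : ℕ} (h : M ≤ N) (f : Fin N → Bool) :
    (List.ofFn f).take M = List.ofFn (res h f) := by
  apply List.ext_getElem
  · simp [h]
  · intro i h1 h2
    simp only [List.getElem_take, List.getElem_ofFn, res]
    congr 1

lemma ofFn_decomp {N M : ℕ} (hM : M ≤ N) (hNM : N = M + 1) (f : Fin N → Bool) :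
    List.ofFn f = List.ofFn (res hM f) ++ [f ⟨M, by omega⟩] := by
  have hdrop : (List.ofFn f).drop M = [f ⟨M, by omega⟩] := by
    have hl : ((List.ofFn f).drop M).length = 1 := by simp; omega
    obtain ⟨b, hb⟩ := List.length_eq_one_iff.1 hl
    have hget : ((List.ofFn f).drop M)[0]'(by rw [hl]; omega) = b := by
      simp [hb]
    rw [List.getElem_drop, List.getElem_ofFn] at hget
    rw [hb, ← hget]
    have he : (⟨M + 0, by omega⟩ : Fin N) = ⟨M, by omega⟩ := Fin.ext (Nat.add_zero M)
    exact congrArg (fun x => [x]) (congrArg f he)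
  rw [← take_ofFn hM f, ← hdrop, List.take_append_drop]

lemma count_true_add_count_false (l : List Bool) :
    l.count true + l.count false = l.length := by
  induction l with
  | nil => rfl
  | cons a t ih => cases a <;> simp [List.count_cons] <;> omega

lemma last_bit_eq {l : List Bool} {b b' : Bool}
    (h1 : Even ((l ++ [b]).count true)) (h2 : Even ((l ++ [b']).count true)) : b = b' := by
  simp only [List.count_append] at h1 h2
  rw [Nat.even_iff] at h1 h2
  cases b <;> cases b' <;> simp_all [List.count_cons, List.count_nil] <;> omega

lemma mid_bit_eq {l : List Bool} {b b' d : Bool}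
    (h1 : Even ((l ++ [b] ++ [d]).count true))
    (h2 : Even ((l ++ [b'] ++ [d]).count true)) : b = b' := by
  simp only [List.count_append] at h1 h2
  rw [Nat.even_iff] at h1 h2
  cases b <;> cases b' <;> cases d <;> simp_all [List.count_cons, List.count_nil] <;> omega

lemma restrict_inj {N M : ℕ} (hM : M ≤ N) (hNM : N = M + 1) {f g : Fin N → Bool}
    (hf : Even ((List.ofFn f).count true)) (hg : Even ((List.ofFn g).count true))
    (hres : res hM f = res hM g) : f = g := by
  rw [ofFn_decomp hM hNM f, hres] at hf
  rw [ofFn_decomp hM hNM g] at hg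
  have hb := last_bit_eq hf hg
  funext i
  rcases lt_or_ge i.1 M with hi | hi
  · have h3 := congrFun hres ⟨i.1, hi⟩
    have h4 : Fin.castLE hM ⟨i.1, hi⟩ = i := Fin.ext rfl
    rwa [res, res, h4] at h3
  · have hiM : i = ⟨M, by omega⟩ := by
      apply Fin.ext
      show i.1 = M
      omega
    rw [hiM]; exact hb

lemma restrict2_inj {N M : ℕ} (hM : M ≤ N) (hM1 : M + 1 ≤ N) (hNM : N = M + 2)
    {f g : Fin N → Bool}
    (hf : Even ((List.ofFn f).count true)) (hg : Even ((List.ofFn g).count true))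
    (hres : res hM f = res hM g)
    (hlast : f ⟨M + 1, by omega⟩ = g ⟨M + 1, by omega⟩) : f = g := by
  have hd1 : List.ofFn f = List.ofFn (res hM1 f) ++ [f ⟨M + 1, by omega⟩] :=
    ofFn_decomp hM1 (by omega) f
  have hd2 : List.ofFn (res hM1 f) =
      List.ofFn (res hM f) ++ [f ⟨M, by omega⟩] := by
    rw [ofFn_decomp (M := M) (by omega) rfl (res hM1 f)]
    congr 1
  have hd1g : List.ofFn g = List.ofFn (res hM1 g) ++ [g ⟨M + 1, by omega⟩] :=
    ofFn_decomp hM1 (by omega) g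
  have hd2g : List.ofFn (res hM1 g) =
      List.ofFn (res hM g) ++ [g ⟨M, by omega⟩] := by
    rw [ofFn_decomp (M := M) (by omega) rfl (res hM1 g)]
    congr 1
  rw [hd1, hd2, hres, hlast] at hf
  rw [hd1g, hd2g] at hg
  have hmid := mid_bit_eq hf hg
  apply restrict_inj hM1 (by omega) (by rw [hd1, hd2, hres, hlast]; exact hf)
    (by rw [hd1g, hd2g]; exact hg)
  funext j
  rcases lt_or_ge j.1 M with hj | hj
  · have h3 := congrFun hres ⟨j.1, hj⟩
    simp only [res] at h3 ⊢
    have h4 : Fin.castLE hM ⟨j.1, hj⟩ = Fin.castLE hM1 j := Fin.ext rfl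
    rwa [h4] at h3
  · have hjM : j = ⟨M, by omega⟩ := by
      apply Fin.ext
      show j.1 = M
      omega
    rw [hjM]
    show f (Fin.castLE hM1 ⟨M, by omega⟩) = g (Fin.castLE hM1 ⟨M, by omega⟩)
    have e1 : Fin.castLE hM1 (⟨M, by omega⟩ : Fin (M+1)) = (⟨M, by omega⟩ : Fin N) := Fin.ext rfl
    rw [e1]
    exact hmid


def SSet (n : ℕ) : Set (Fin (2 * n) → Bool) := {f | IsShuffleSquare (List.ofFn f)}

def ESet (n : ℕ) : Set (Fin (2 * n) → Bool) :=
  {f | Even ((List.ofFn f).count true) ∧ Even ((List.ofFn f).count false)}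

def GSet (N : ℕ) : Set (Fin N → Bool) :=
  {f | (N + 1) / 2 - 1 ≤ twinSemiLength (List.ofFn f)}

lemma SSet_subset_ESet (n : ℕ) : SSet n ⊆ ESet n := by
  intro f hf
  obtain ⟨w, hw⟩ := (shuffleSquare_iff _).1 hf
  exact ⟨⟨w.count true, hw.count true⟩, ⟨w.count false, hw.count false⟩⟩

lemma restrict_surj {N M : ℕ} (hM : M ≤ N) (hNM : N = M + 1) (g : Fin M → Bool) :
    ∃ f : Fin N → Bool, Even ((List.ofFn f).count true) ∧ res hM f = g := by
  classical
  set c := (List.ofFn g).count true with hc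
  set F : Fin N → Bool := fun i => if h : i.1 < M then g ⟨i.1, h⟩ else decide (c % 2 = 1) with hF
  have hres : res hM F = g := by
    funext j
    have hj : (Fin.castLE hM j).1 < M := j.2
    simp [res, hF, hj]
  have hlastv : F ⟨M, by omega⟩ = decide (c % 2 = 1) := by simp [hF]
  refine ⟨F, ?_, hres⟩
  rw [ofFn_decomp hM hNM F, hres, hlastv, List.count_append]
  rcases Nat.even_or_odd c with he | ho
  · have hb : decide (c % 2 = 1) = false := by simp [Nat.even_iff.1 he]
    rw [hb]
    simpa using he
  · have hb : decide (c % 2 = 1) = true := by simp [Nat.odd_iff.1 ho]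
    rw [hb]
    have h1 := Nat.odd_iff.1 ho
    rw [Nat.even_iff]
    simp [List.count_cons]
    omega

lemma ncard_univ_bool (M : ℕ) : (Set.univ : Set (Fin M → Bool)).ncard = 2 ^ M := by
  rw [Set.ncard_univ, Nat.card_eq_fintype_card]
  simp

lemma ncard_ESet {n : ℕ} (hn : 1 ≤ n) : (ESet n).ncard = 2 ^ (2 * n - 1) := by
  have hM : 2 * n - 1 ≤ 2 * n := by omega
  have hNM : 2 * n = (2 * n - 1) + 1 := by omega
  have hinj : Set.InjOn (res hM) (ESet n) := fun f hf g hg hres =>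
    restrict_inj hM hNM hf.1 hg.1 hres
  have himg : res hM '' (ESet n) = Set.univ := by
    apply Set.eq_univ_of_forall
    intro g
    obtain ⟨f, hf, hres2⟩ := restrict_surj hM hNM g
    have hfalse : Even ((List.ofFn f).count false) := by
      have h1 := count_true_add_count_false (List.ofFn f)
      have h2 : (List.ofFn f).length = 2 * n := by simp
      rw [Nat.even_iff] at hf ⊢
      omega
    exact ⟨f, ⟨hf, hfalse⟩, hres2⟩
  rw [← Set.ncard_image_of_injOn hinj, himg, ncard_univ_bool]

lemma maps_odd {n : ℕ} (hn : 1 ≤ n) (hM : 2 * n - 1 ≤ 2 * n) {f : Fin (2 * n) → Bool}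
    (hf : f ∈ SSet n) : res hM f ∈ GSet (2 * n - 1) := by
  show (2 * n - 1 + 1) / 2 - 1 ≤ twinSemiLength (List.ofFn (res hM f))
  rw [← take_ofFn hM f]
  have hlen : (List.ofFn f).length = 2 * n := by simp
  have hdl : (List.ofFn f).dropLast = (List.ofFn f).take (2 * n - 1) := by
    rw [List.dropLast_eq_take, hlen]
  rw [← hdl]
  have hlow := twin_dropLast hlen hf hn
  omega

lemma maps_even {n : ℕ} (hn : 2 ≤ n) (hM : 2 * n - 2 ≤ 2 * n) {f : Fin (2 * n) → Bool}
    (hf : f ∈ SSet n) : res hM f ∈ GSet (2 * n - 2) := by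
  show (2 * n - 2 + 1) / 2 - 1 ≤ twinSemiLength (List.ofFn (res hM f))
  rw [← take_ofFn hM f]
  have hlen : (List.ofFn f).length = 2 * n := by simp
  have hdl : (List.ofFn f).dropLast.dropLast = (List.ofFn f).take (2 * n - 2) := by
    simp only [List.dropLast_eq_take, List.length_take, List.take_take, hlen]
    congr 1
    omega
  rw [← hdl]
  have hlow := twin_dropLast2 hlen hf hn
  omega

lemma card_odd {n : ℕ} (hn : 1 ≤ n) : (SSet n).ncard ≤ (GSet (2 * n - 1)).ncard := by
  have hM : 2 * n - 1 ≤ 2 * n := by omega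
  apply Set.ncard_le_ncard_of_injOn (res hM)
  · exact fun f hf => maps_odd hn hM hf
  · intro f hf g hg hres
    exact restrict_inj hM (by omega) ((SSet_subset_ESet n) hf).1 ((SSet_subset_ESet n) hg).1 hres

lemma card_even {n : ℕ} (hn : 2 ≤ n) : (SSet n).ncard ≤ 2 * (GSet (2 * n - 2)).ncard := by
  have hM : 2 * n - 2 ≤ 2 * n := by omega
  classical
  have hb : ∀ b : Bool, ({f ∈ SSet n | f ⟨2 * n - 1, by omega⟩ = b}).ncard ≤
      (GSet (2 * n - 2)).ncard := by
    intro b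
    apply Set.ncard_le_ncard_of_injOn (res hM)
    · exact fun f hf => maps_even hn hM hf.1
    · intro f hf g hg hres
      refine restrict2_inj hM (by omega) (by omega) ((SSet_subset_ESet n) hf.1).1
        ((SSet_subset_ESet n) hg.1).1 hres ?_
      have he : ((⟨2 * n - 2 + 1, by omega⟩ : Fin (2 * n))) = ⟨2 * n - 1, by omega⟩ := by
        apply Fin.ext
        show 2 * n - 2 + 1 = 2 * n - 1
        omega
      rw [he, hf.2, hg.2]
  have hcover : SSet n = {f ∈ SSet n | f ⟨2 * n - 1, by omega⟩ = false} ∪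
      {f ∈ SSet n | f ⟨2 * n - 1, by omega⟩ = true} := by
    ext f
    simp only [Set.mem_union, Set.mem_setOf_eq]
    rcases Bool.eq_false_or_eq_true (f ⟨2 * n - 1, by omega⟩) with hfb | hfb <;> tauto
  calc (SSet n).ncard = ({f ∈ SSet n | f ⟨2 * n - 1, by omega⟩ = false} ∪
      {f ∈ SSet n | f ⟨2 * n - 1, by omega⟩ = true}).ncard := by rw [← hcover]
    _ ≤ ({f ∈ SSet n | f ⟨2 * n - 1, by omega⟩ = false}).ncard +
        ({f ∈ SSet n | f ⟨2 * n - 1, by omega⟩ = true}).ncard := Set.ncard_union_le _ _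
    _ ≤ 2 * (GSet (2 * n - 2)).ncard := by
        exact (Nat.add_le_add (hb false) (hb true)).trans (two_mul _).ge

lemma card_GSet_le (N : ℕ) : (GSet N).ncard ≤ 2 ^ N := by
  have h1 := Set.ncard_le_ncard (Set.subset_univ (GSet N)) (Set.toFinite _)
  rwa [ncard_univ_bool] at h1

end Twins

theorem twins_from_shuffle_squares
    (h : Filter.Tendsto
      (fun n : ℕ =>
        ({f : Fin (2 * n) → Bool | IsShuffleSquare (List.ofFn f)}.ncard : ℝ) /
        ({f : Fin (2 * n) → Bool |
            Even ((List.ofFn f).count true) ∧ Even ((List.ofFn f).count false)}.ncard : ℝ))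
      Filter.atTop (nhds 1)) :
    Filter.Tendsto
      (fun n : ℕ =>
        ({f : Fin n → Bool |
            (n + 1) / 2 - 1 ≤ twinSemiLength (List.ofFn f)}.ncard : ℝ) / 2 ^ n)
      Filter.atTop (nhds 1) := by
  have h' : Filter.Tendsto
      (fun n : ℕ => ((Twins.SSet n).ncard : ℝ) / ((Twins.ESet n).ncard : ℝ))
      Filter.atTop (nhds 1) := h
  have hkey : ∀ N : ℕ, 1 ≤ N →
      ((Twins.SSet (N / 2 + 1)).ncard : ℝ) / ((Twins.ESet (N / 2 + 1)).ncard : ℝ) ≤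
        ((Twins.GSet N).ncard : ℝ) / 2 ^ N := by
    intro N hN
    set n := N / 2 + 1 with hn
    have hn1 : 1 ≤ n := by omega
    rw [Twins.ncard_ESet hn1]
    push_cast
    rcases Nat.even_or_odd N with he | ho
    · obtain ⟨k, hk⟩ := he
      have hNn : N = 2 * n - 2 := by omega
      have hn2 : 2 ≤ n := by omega
      have hcard := Twins.card_even hn2
      rw [← hNn] at hcard
      have hpow : ((2 : ℝ) ^ (2 * n - 1) : ℝ) = 2 ^ N * 2 := by
        rw [show 2 * n - 1 = N + 1 by omega, pow_succ]
      rw [hpow, div_le_div_iff₀ (by positivity) (by positivity)]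
      have hc : ((Twins.SSet n).ncard : ℝ) ≤ 2 * ((Twins.GSet N).ncard : ℝ) := by
        exact_mod_cast hcard
      nlinarith [pow_pos (show (0 : ℝ) < 2 by norm_num) N]
    · obtain ⟨k, hk⟩ := ho
      have hNn : N = 2 * n - 1 := by omega
      have hcard := Twins.card_odd hn1
      rw [← hNn] at hcard
      rw [show 2 * n - 1 = N by omega]
      apply div_le_div_of_nonneg_right ?_ (by positivity)
      exact_mod_cast hcard
  have hup : ∀ N : ℕ, ((Twins.GSet N).ncard : ℝ) / 2 ^ N ≤ 1 := by
    intro N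
    rw [div_le_one (by positivity)]
    exact_mod_cast Twins.card_GSet_le N
  have hcomp : Filter.Tendsto (fun N : ℕ => N / 2 + 1) Filter.atTop Filter.atTop :=
    Filter.tendsto_atTop_atTop.mpr fun b => ⟨2 * b, fun N hN => by omega⟩
  refine tendsto_of_tendsto_of_tendsto_of_le_of_le' (h'.comp hcomp) tendsto_const_nhds ?_ ?_
  · filter_upwards [Filter.eventually_ge_atTop 1] with N hN using hkey N hN
  · filter_upwards with N using hup N
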